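/- The Figalli–Gigli distance on an open bounded interval Ω = (x_min, x_max) is not greater than the Piccoli–Rossi distance in general; more specifically, for any two finite atomic measures supported in Ω, the Figalli–Gigli value in the LP formulation is bounded above by the cost of transporting all of each measure to its nearest boundary point: W^FG_1(μ^S, μ^D) ≤ ∫_Ω dist(x, ∂Ω) dμ^S + ∫_Ω dist(x, ∂Ω) dμ^D. -/

import Mathlib

open MeasureTheory

/-- The Figalli–Gigli distance (`p = 1`) on the open bounded interval
`Ω = (xmin, xmax)`: infimum of `∫ |x − y| dγ` over nonnegative finite measures `γ` on
`Ω̄ × Ω̄` whose marginals restricted to `Ω` are the prescribed measures. -/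
noncomputable def FG1 (xmin xmax : ℝ) (μS μD : Measure ℝ) : ENNReal :=
  sInf {c : ENNReal | ∃ γ : Measure (ℝ × ℝ),
    γ ((Set.Icc xmin xmax ×ˢ Set.Icc xmin xmax)ᶜ) = 0 ∧
    (γ.map Prod.fst).restrict (Set.Ioo xmin xmax) = μS ∧
    (γ.map Prod.snd).restrict (Set.Ioo xmin xmax) = μD ∧
    c = ∫⁻ q, ENNReal.ofReal |q.1 - q.2| ∂γ}

private lemma map_finset_sum' {α β : Type*} [MeasurableSpace α] [MeasurableSpace β]
    {ι : Type*} (s : Finset ι) (μ : ι → Measure α) {f : α → β} (hf : Measurable f) :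
    (∑ i ∈ s, μ i).map f = ∑ i ∈ s, (μ i).map f := by
  classical
  induction s using Finset.induction_on with
  | empty => simp
  | insert _ _ h ih => simp [Finset.sum_insert h, Measure.map_add _ _ hf, ih]

private lemma restrict_finset_sum' {α : Type*} [MeasurableSpace α]
    {ι : Type*} (s : Finset ι) (μ : ι → Measure α) (t : Set α) :
    (∑ i ∈ s, μ i).restrict t = ∑ i ∈ s, (μ i).restrict t := by
  classical
  induction s using Finset.induction_on with
  | empty => simp
  | insert _ _ h ih => simp [Finset.sum_insert h, Measure.restrict_add, ih]

/-- For any two finite atomic measures supported in `Ω = (xmin, xmax)`,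
the Figalli–Gigli distance is bounded above by the cost of transporting all of each
measure to its nearest boundary point:
`W₁^FG(μS, μD) ≤ ∫ dist(x, ∂Ω) dμS + ∫ dist(x, ∂Ω) dμD`. -/
theorem FG1_le_boundary_cost (xmin xmax : ℝ) (hx : xmin < xmax)
    (n m : ℕ) (xS : Fin n → ℝ) (xD : Fin m → ℝ)
    (hxS : ∀ i, xS i ∈ Set.Ioo xmin xmax) (hxD : ∀ i, xD i ∈ Set.Ioo xmin xmax)
    (mS : Fin n → ℝ) (mD : Fin m → ℝ) (hmS : ∀ i, 0 ≤ mS i) (hmD : ∀ i, 0 ≤ mD i) :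
    FG1 xmin xmax
        (∑ i, ENNReal.ofReal (mS i) • Measure.dirac (xS i))
        (∑ i, ENNReal.ofReal (mD i) • Measure.dirac (xD i))
      ≤ ENNReal.ofReal
          (∑ i, mS i * min (xS i - xmin) (xmax - xS i)
            + ∑ i, mD i * min (xD i - xmin) (xmax - xD i)) := by
  classical
  set b : ℝ → ℝ := fun x => if x - xmin ≤ xmax - x then xmin else xmax with hbdef
  have hbIcc : ∀ x, b x ∈ Set.Icc xmin xmax := by
    intro x
    rw [hbdef]
    dsimp only
    split_ifs <;> constructor <;> linarith
  have hbnotIoo : ∀ x, b x ∉ Set.Ioo xmin xmax := by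
    intro x
    rw [hbdef]
    dsimp only
    split_ifs <;> rintro ⟨h1, h2⟩ <;> linarith
  have habs : ∀ x, x ∈ Set.Ioo xmin xmax →
      |x - b x| = min (x - xmin) (xmax - x) := by
    intro x hxm
    by_cases h : x - xmin ≤ xmax - x
    · rw [hbdef]
      simp only [h, if_pos]
      rw [abs_of_nonneg (by linarith [hxm.1]), min_eq_left h]
    · rw [hbdef]
      simp only [h, if_neg, if_false]
      rw [abs_of_nonpos (by linarith [hxm.2]), min_eq_right (le_of_lt (not_le.mp h))]
      ring
  set γ : Measure (ℝ × ℝ) :=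
    (∑ i, ENNReal.ofReal (mS i) • Measure.dirac (xS i, b (xS i))) +
    (∑ j, ENNReal.ofReal (mD j) • Measure.dirac (b (xD j), xD j)) with hγdef
  apply sInf_le
  refine ⟨γ, ?_, ?_, ?_, ?_⟩
  · -- supported on Icc × Icc
    have h1 : ∀ i : Fin n, (xS i, b (xS i)) ∈ Set.Icc xmin xmax ×ˢ Set.Icc xmin xmax :=
      fun i => ⟨Set.mem_Icc_of_Ioo (hxS i), hbIcc _⟩
    have h2 : ∀ j : Fin m, (b (xD j), xD j) ∈ Set.Icc xmin xmax ×ˢ Set.Icc xmin xmax :=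
      fun j => ⟨hbIcc _, Set.mem_Icc_of_Ioo (hxD j)⟩
    have hmeas : MeasurableSet ((Set.Icc xmin xmax ×ˢ Set.Icc xmin xmax)ᶜ) :=
      (measurableSet_Icc.prod measurableSet_Icc).compl
    simp only [hγdef, Measure.add_apply, Measure.finset_sum_apply, Measure.smul_apply,
      smul_eq_mul]
    rw [Finset.sum_eq_zero, Finset.sum_eq_zero, add_zero]
    · intro j _
      rw [Measure.dirac_apply' _ hmeas,
        Set.indicator_of_notMem (by simp only [Set.notMem_compl_iff]; exact h2 j), mul_zero]
    · intro i _
      rw [Measure.dirac_apply' _ hmeas,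
        Set.indicator_of_notMem (by simp only [Set.notMem_compl_iff]; exact h1 i), mul_zero]
  · -- first marginal
    rw [hγdef, Measure.map_add _ _ measurable_fst, map_finset_sum' _ _ measurable_fst,
      map_finset_sum' _ _ measurable_fst]
    simp only [Measure.map_smul, Measure.map_dirac' measurable_fst]
    rw [Measure.restrict_add, restrict_finset_sum', restrict_finset_sum']
    have hS : ∀ i : Fin n,
        (ENNReal.ofReal (mS i) • Measure.dirac (xS i)).restrict (Set.Ioo xmin xmax)
          = ENNReal.ofReal (mS i) • Measure.dirac (xS i) := by
      intro i
      rw [Measure.restrict_smul, MeasureTheory.restrict_dirac, if_pos (hxS i)]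
    have hD : ∀ j : Fin m,
        (ENNReal.ofReal (mD j) • Measure.dirac (b (xD j))).restrict (Set.Ioo xmin xmax)
          = 0 := by
      intro j
      rw [Measure.restrict_smul, MeasureTheory.restrict_dirac, if_neg (hbnotIoo _), smul_zero]
    simp only [hS, hD, Finset.sum_const_zero, add_zero]
  · -- second marginal
    rw [hγdef, Measure.map_add _ _ measurable_snd, map_finset_sum' _ _ measurable_snd,
      map_finset_sum' _ _ measurable_snd]
    simp only [Measure.map_smul, Measure.map_dirac' measurable_snd]
    rw [Measure.restrict_add, restrict_finset_sum', restrict_finset_sum']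
    have hS : ∀ i : Fin n,
        (ENNReal.ofReal (mS i) • Measure.dirac (b (xS i))).restrict (Set.Ioo xmin xmax)
          = 0 := by
      intro i
      rw [Measure.restrict_smul, MeasureTheory.restrict_dirac, if_neg (hbnotIoo _), smul_zero]
    have hD : ∀ j : Fin m,
        (ENNReal.ofReal (mD j) • Measure.dirac (xD j)).restrict (Set.Ioo xmin xmax)
          = ENNReal.ofReal (mD j) • Measure.dirac (xD j) := by
      intro j
      rw [Measure.restrict_smul, MeasureTheory.restrict_dirac, if_pos (hxD j)]
    simp only [hS, hD, Finset.sum_const_zero, zero_add]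
  · -- cost
    rw [hγdef, lintegral_add_measure, lintegral_finset_sum_measure,
      lintegral_finset_sum_measure]
    simp only [lintegral_smul_measure, lintegral_dirac]
    have hS : ∀ i : Fin n,
        ENNReal.ofReal (mS i) * ENNReal.ofReal |xS i - b (xS i)|
          = ENNReal.ofReal (mS i * min (xS i - xmin) (xmax - xS i)) := by
      intro i
      rw [habs _ (hxS i), ← ENNReal.ofReal_mul (hmS i)]
    have hD : ∀ j : Fin m,
        ENNReal.ofReal (mD j) * ENNReal.ofReal |b (xD j) - xD j|
          = ENNReal.ofReal (mD j * min (xD j - xmin) (xmax - xD j)) := by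
      intro j
      rw [abs_sub_comm, habs _ (hxD j), ← ENNReal.ofReal_mul (hmD j)]
    simp only [smul_eq_mul, hS, hD]
    have hnnS : ∀ i : Fin n, 0 ≤ mS i * min (xS i - xmin) (xmax - xS i) := by
      intro i
      exact mul_nonneg (hmS i) (le_min (by linarith [(hxS i).1]) (by linarith [(hxS i).2]))
    have hnnD : ∀ j : Fin m, 0 ≤ mD j * min (xD j - xmin) (xmax - xD j) := by
      intro j
      exact mul_nonneg (hmD j) (le_min (by linarith [(hxD j).1]) (by linarith [(hxD j).2]))
    rw [ENNReal.ofReal_add (Finset.sum_nonneg fun i _ => hnnS i)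
        (Finset.sum_nonneg fun j _ => hnnD j),
      ENNReal.ofReal_sum_of_nonneg (fun i _ => hnnS i),
      ENNReal.ofReal_sum_of_nonneg (fun j _ => hnnD j)]
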